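/- Let H(q) be the Taft algebra generated by g, x with x^{n²} = 0, g^{n²} = 1, gx = qxg (q a primitive n²-th root of unity, char k prime to n). Let A(q) be the subalgebra generated by a := g^n and x. Then dim_k A(q) = n³, with basis {x^i a^j : 0 ≤ i ≤ n²-1, 0 ≤ j ≤ n-1}. -/

import Mathlib

/-- Relations of the Taft algebra: x^{n²} = 0, g^{n²} = 1, gx = qxg,
    where `false` corresponds to g and `true` to x. -/
inductive TaftRel (k : Type*) [CommRing k] (n : ℕ) (q : k) :
    FreeAlgebra k Bool → FreeAlgebra k Bool → Prop
  | xpow : TaftRel k n q (FreeAlgebra.ι k true ^ n ^ 2) 0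
  | gpow : TaftRel k n q (FreeAlgebra.ι k false ^ n ^ 2) 1
  | comm : TaftRel k n q (FreeAlgebra.ι k false * FreeAlgebra.ι k true)
      (q • (FreeAlgebra.ι k true * FreeAlgebra.ι k false))

/-- The Taft algebra H(q), of dimension n⁴. -/
def TaftAlgebra (k : Type*) [CommRing k] (n : ℕ) (q : k) : Type _ :=
  RingQuot (TaftRel k n q)

noncomputable instance (k : Type*) [CommRing k] (n : ℕ) (q : k) :
    Ring (TaftAlgebra k n q) := by unfold TaftAlgebra; infer_instance

noncomputable instance (k : Type*) [CommRing k] (n : ℕ) (q : k) :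
    Algebra k (TaftAlgebra k n q) := by unfold TaftAlgebra; infer_instance

/-- The image of g in the Taft algebra. -/
noncomputable def TaftG (k : Type*) [CommRing k] (n : ℕ) (q : k) :
    TaftAlgebra k n q :=
  RingQuot.mkAlgHom k (TaftRel k n q) (FreeAlgebra.ι k false)

/-- The image of x in the Taft algebra. -/
noncomputable def TaftX (k : Type*) [CommRing k] (n : ℕ) (q : k) :
    TaftAlgebra k n q :=
  RingQuot.mkAlgHom k (TaftRel k n q) (FreeAlgebra.ι k true)


open Fin.NatCast Fin.CommRing

section Rep

variable (k : Type*) [CommRing k]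

/-- Left multiplication by x on the model space spanned by monomials x^i g^j. -/
def Xop (d : ℕ) : ((Fin d × Fin d) → k) →ₗ[k] ((Fin d × Fin d) → k) where
  toFun v p := if h : 0 < (p.1 : ℕ) then
    v (⟨(p.1 : ℕ) - 1, lt_of_le_of_lt (Nat.sub_le _ _) p.1.isLt⟩, p.2) else 0
  map_add' u v := by
    funext p; simp only [Pi.add_apply]
    split
    · rfl
    · simp
  map_smul' c v := by
    funext p; simp only [Pi.smul_apply, RingHom.id_apply, smul_eq_mul]
    split
    · rfl
    · simp

/-- Left multiplication by g on the model space. -/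
def Gop (d : ℕ) [NeZero d] (q : k) :
    ((Fin d × Fin d) → k) →ₗ[k] ((Fin d × Fin d) → k) where
  toFun v p := q ^ (p.1 : ℕ) * v (p.1, p.2 - 1)
  map_add' u v := by funext p; simp [mul_add]
  map_smul' c v := by funext p; simp; ring

lemma Xop_apply (d : ℕ) (v : (Fin d × Fin d) → k) (p : Fin d × Fin d) :
    Xop k d v p = if h : 0 < (p.1 : ℕ) then
      v (⟨(p.1 : ℕ) - 1, lt_of_le_of_lt (Nat.sub_le _ _) p.1.isLt⟩, p.2) else 0 := rfl

lemma Gop_apply (d : ℕ) [NeZero d] (q : k) (v : (Fin d × Fin d) → k) (p : Fin d × Fin d) :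
    Gop k d q v p = q ^ (p.1 : ℕ) * v (p.1, p.2 - 1) := rfl

lemma Xop_pow_apply (d m : ℕ) (v : (Fin d × Fin d) → k) (p : Fin d × Fin d) :
    ((Xop k d) ^ m) v p = if h : m ≤ (p.1 : ℕ) then
      v (⟨(p.1 : ℕ) - m, lt_of_le_of_lt (Nat.sub_le _ _) p.1.isLt⟩, p.2) else 0 := by
  induction m generalizing v with
  | zero => simp
  | succ m ih =>
    rw [pow_succ, Module.End.mul_apply, ih]
    by_cases h1 : m + 1 ≤ (p.1 : ℕ)
    · rw [dif_pos (show m ≤ (p.1 : ℕ) by omega), Xop_apply,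
        dif_pos (show 0 < (((⟨(p.1:ℕ) - m, _⟩ : Fin d)) : ℕ) by simpa using by omega),
        dif_pos h1]
      rfl
    · rw [dif_neg h1]
      by_cases h2 : m ≤ (p.1 : ℕ)
      · rw [dif_pos h2, Xop_apply,
          dif_neg (show ¬ 0 < (((⟨(p.1:ℕ) - m, _⟩ : Fin d)) : ℕ) by simpa using by omega)]
      · rw [dif_neg h2]

lemma Gop_pow_apply (d : ℕ) [NeZero d] (q : k) (m : ℕ) (v : (Fin d × Fin d) → k)
    (p : Fin d × Fin d) :
    ((Gop k d q) ^ m) v p = q ^ (m * (p.1 : ℕ)) * v (p.1, p.2 - (m : Fin d)) := by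
  induction m generalizing v with
  | zero => simp
  | succ m ih =>
    rw [pow_succ, Module.End.mul_apply, ih, Gop_apply]
    have h : ((m + 1 : ℕ) : Fin d) = (m : Fin d) + 1 := by push_cast; ring
    rw [h, ← sub_sub, ← mul_assoc, ← pow_add]
    ring_nf

lemma Xop_pow_d (d : ℕ) : (Xop k d) ^ d = 0 := by
  refine LinearMap.ext fun v => funext fun p => ?_
  rw [Xop_pow_apply, dif_neg (by omega : ¬ d ≤ (p.1 : ℕ))]
  rfl

lemma Gop_pow_d (d : ℕ) [NeZero d] (q : k) (hq : q ^ d = 1) : (Gop k d q) ^ d = 1 := by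
  refine LinearMap.ext fun v => funext fun p => ?_
  rw [Gop_pow_apply, Fin.natCast_self, sub_zero, pow_mul, hq, one_pow, one_mul, Module.End.one_apply]

lemma Gop_mul_Xop (d : ℕ) [NeZero d] (q : k) :
    Gop k d q * Xop k d = q • (Xop k d * Gop k d q) := by
  refine LinearMap.ext fun v => funext fun p => ?_
  simp only [Module.End.mul_apply, LinearMap.smul_apply, Pi.smul_apply, smul_eq_mul,
    Gop_apply, Xop_apply]
  by_cases h : 0 < (p.1 : ℕ)
  · have hq' : q ^ (p.1 : ℕ) = q * q ^ ((p.1 : ℕ) - 1) := by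
      conv_lhs => rw [show (p.1 : ℕ) = ((p.1 : ℕ) - 1) + 1 by omega]
      rw [pow_succ]; ring
    rw [dif_pos h, dif_pos h, hq', mul_assoc]
  · rw [dif_neg h, dif_neg h, mul_zero, mul_zero]

end Rep

section Taft

variable {k : Type*} [CommRing k] {n : ℕ} {q : k}

lemma taftX_pow : TaftX k n q ^ (n ^ 2) = 0 := by
  have h : (RingQuot.mkAlgHom k (TaftRel k n q)) (FreeAlgebra.ι k true ^ n ^ 2)
      = (RingQuot.mkAlgHom k (TaftRel k n q)) 0 := RingQuot.mkAlgHom_rel k TaftRel.xpow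
  rw [map_pow, map_zero] at h
  exact h

lemma taftG_pow : TaftG k n q ^ (n ^ 2) = 1 := by
  have h : (RingQuot.mkAlgHom k (TaftRel k n q)) (FreeAlgebra.ι k false ^ n ^ 2)
      = (RingQuot.mkAlgHom k (TaftRel k n q)) 1 := RingQuot.mkAlgHom_rel k TaftRel.gpow
  rw [map_pow, map_one] at h
  exact h

lemma taftG_mul_X : TaftG k n q * TaftX k n q = q • (TaftX k n q * TaftG k n q) := by
  have h : (RingQuot.mkAlgHom k (TaftRel k n q)) (FreeAlgebra.ι k false * FreeAlgebra.ι k true)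
      = (RingQuot.mkAlgHom k (TaftRel k n q)) (q • (FreeAlgebra.ι k true * FreeAlgebra.ι k false)) :=
    RingQuot.mkAlgHom_rel k TaftRel.comm
  rw [map_mul, map_smul, map_mul] at h
  exact h

lemma taftG_pow_mul_X (m : ℕ) :
    TaftG k n q ^ m * TaftX k n q = q ^ m • (TaftX k n q * TaftG k n q ^ m) := by
  induction m with
  | zero => simp
  | succ m ih =>
    rw [pow_succ, mul_assoc, taftG_mul_X, mul_smul_comm, ← mul_assoc, ih, smul_mul_assoc,
      smul_smul, mul_assoc, ← pow_succ, ← pow_succ']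

lemma taftG_pow_mul_X_pow (m i : ℕ) :
    TaftG k n q ^ m * TaftX k n q ^ i = q ^ (m * i) • (TaftX k n q ^ i * TaftG k n q ^ m) := by
  induction i with
  | zero => simp
  | succ i ih =>
    rw [pow_succ, ← mul_assoc, ih, smul_mul_assoc, mul_assoc, taftG_pow_mul_X, mul_smul_comm,
      smul_smul, ← pow_add, ← mul_assoc, ← pow_succ, Nat.mul_succ]

instance taftNeZeroSq (n : ℕ) [NeZero n] : NeZero (n ^ 2) := ⟨pow_ne_zero 2 (NeZero.ne n)⟩

/-- The generators of the representation. -/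
noncomputable def taftOps (n : ℕ) [NeZero n] (q : k) :
    Bool → Module.End k ((Fin (n ^ 2) × Fin (n ^ 2)) → k) :=
  fun b => if b then Xop k (n ^ 2) else Gop k (n ^ 2) q

lemma taftRel_lift (n : ℕ) [NeZero n] (q : k) (hq : q ^ (n ^ 2) = 1) :
    ∀ ⦃a b⦄, TaftRel k n q a b →
      FreeAlgebra.lift k (taftOps n q) a = FreeAlgebra.lift k (taftOps n q) b := by
  intro a b h
  induction h with
  | xpow => simp [map_pow, FreeAlgebra.lift_ι_apply, taftOps, Xop_pow_d]
  | gpow => simp [map_pow, FreeAlgebra.lift_ι_apply, taftOps, Gop_pow_d k (n ^ 2) q hq]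
  | comm => simp [map_mul, map_smul, FreeAlgebra.lift_ι_apply, taftOps, Gop_mul_Xop]

/-- The left regular representation of the Taft algebra. -/
noncomputable def taftRep (n : ℕ) [NeZero n] (q : k) (hq : q ^ (n ^ 2) = 1) :
    TaftAlgebra k n q →ₐ[k] Module.End k ((Fin (n ^ 2) × Fin (n ^ 2)) → k) :=
  RingQuot.liftAlgHom k ⟨FreeAlgebra.lift k (taftOps n q), taftRel_lift n q hq⟩

lemma taftRep_X (n : ℕ) [NeZero n] (hq : q ^ (n ^ 2) = 1) :
    taftRep n q hq (TaftX k n q) = Xop k (n ^ 2) := by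
  have h := RingQuot.liftAlgHom_mkAlgHom_apply (S := k)
    (FreeAlgebra.lift k (taftOps n q)) (taftRel_lift n q hq) (FreeAlgebra.ι k true)
  rw [FreeAlgebra.lift_ι_apply] at h
  have h2 : taftOps (k := k) n q true = Xop k (n ^ 2) := rfl
  rw [h2] at h
  exact h

lemma taftRep_G (n : ℕ) [NeZero n] (hq : q ^ (n ^ 2) = 1) :
    taftRep n q hq (TaftG k n q) = Gop k (n ^ 2) q := by
  have h := RingQuot.liftAlgHom_mkAlgHom_apply (S := k)
    (FreeAlgebra.lift k (taftOps n q)) (taftRel_lift n q hq) (FreeAlgebra.ι k false)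
  rw [FreeAlgebra.lift_ι_apply] at h
  have h2 : taftOps (k := k) n q false = Gop k (n ^ 2) q := rfl
  rw [h2] at h
  exact h

end Taft

section Eval

variable {k : Type*} [Field k]

/-- The cyclic vector (basis element corresponding to the monomial 1). -/
def e0 (k : Type*) [Field k] (d : ℕ) [NeZero d] : (Fin d × Fin d) → k :=
  fun p => if p = (0, 0) then 1 else 0

lemma e0_eq_zero {d : ℕ} [NeZero d] {p : Fin d × Fin d} (h : p ≠ (0, 0)) : e0 k d p = 0 :=
  if_neg h

lemma eval_aux (n : ℕ) [NeZero n] (q : k) (i j i' j' : ℕ) (hi' : i' < n ^ 2)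
    (hj : j < n) (hj' : j' < n) :
    (((Xop k (n ^ 2)) ^ i * (Gop k (n ^ 2) q) ^ (n * j) :
        Module.End k ((Fin (n ^ 2) × Fin (n ^ 2)) → k)) (e0 k (n ^ 2)))
      (⟨i', hi'⟩, ((n * j' : ℕ) : Fin (n ^ 2))) = if i = i' ∧ j = j' then 1 else 0 := by
  have hnpos : 0 < n := Nat.pos_of_ne_zero (NeZero.ne n)
  have hb : ∀ m, m < n → n * m < n ^ 2 := fun m hm => by
    calc n * m < n * n := by exact mul_lt_mul_of_pos_left hm hnpos
    _ = n ^ 2 := (pow_two n).symm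
  rw [Module.End.mul_apply, Xop_pow_apply]
  by_cases h1 : i ≤ i'
  · rw [dif_pos (show i ≤ (((⟨i', hi'⟩ : Fin (n ^ 2))) : ℕ) from h1), Gop_pow_apply]
    by_cases h2 : i = i' ∧ j = j'
    · obtain ⟨rfl, rfl⟩ := h2
      rw [if_pos ⟨rfl, rfl⟩]
      simp only [Nat.sub_self, sub_self]
      rw [show (e0 k (n ^ 2)) ((⟨0, by positivity⟩ : Fin (n ^ 2)), (0 : Fin (n ^ 2))) = 1 from
        if_pos (by simp [Prod.ext_iff, Fin.ext_iff])]
      simp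
    · rw [if_neg h2, e0_eq_zero, mul_zero]
      intro hcontr
      rw [Prod.mk.injEq] at hcontr
      obtain ⟨hc1, hc2⟩ := hcontr
      rw [sub_eq_zero] at hc2
      have hii : i = i' := by
        have h3 := congrArg Fin.val hc1
        simp only [Fin.val_zero] at h3
        omega
      have hjj : j = j' := by
        have h3 := congrArg Fin.val hc2
        simp only [Fin.val_natCast] at h3
        rw [Nat.mod_eq_of_lt (hb _ hj'), Nat.mod_eq_of_lt (hb _ hj)] at h3
        exact Nat.eq_of_mul_eq_mul_left hnpos h3.symm
      exact h2 ⟨hii, hjj⟩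
  · rw [dif_neg h1, if_neg (by rintro ⟨rfl, -⟩; omega)]

lemma taft_w_indep (n : ℕ) (hn : 2 ≤ n) (q : k) (hq : q ^ (n ^ 2) = 1) :
    LinearIndependent k (fun p : Fin (n ^ 2) × Fin n =>
      TaftX k n q ^ (p.1 : ℕ) * (TaftG k n q ^ n) ^ (p.2 : ℕ)) := by
  haveI : NeZero n := ⟨by omega⟩
  letI : @Module k (TaftAlgebra k n q) _ AddCommGroup.toAddCommMonoid := Algebra.toModule
  refine Fintype.linearIndependent_iff.mpr ?_
  intro c hc p0
  have hrep := congrArg (taftRep n q hq) hc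
  rw [map_zero, map_sum] at hrep
  simp only [map_smul, map_mul, map_pow, taftRep_X n hq, taftRep_G n hq, ← pow_mul] at hrep
  have heval := congrFun (congrArg
    (fun f : Module.End k ((Fin (n ^ 2) × Fin (n ^ 2)) → k) => f (e0 k (n ^ 2))) hrep)
    (p0.1, ((n * (p0.2 : ℕ) : ℕ) : Fin (n ^ 2)))
  simp only [LinearMap.sum_apply, LinearMap.smul_apply, LinearMap.zero_apply,
    Finset.sum_apply, Pi.smul_apply, Pi.zero_apply, smul_eq_mul] at heval
  have key : ∀ p : Fin (n ^ 2) × Fin n,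
      (((Xop k (n ^ 2)) ^ ((p.1 : ℕ)) * (Gop k (n ^ 2) q) ^ (n * (p.2 : ℕ)) :
          Module.End k ((Fin (n ^ 2) × Fin (n ^ 2)) → k)) (e0 k (n ^ 2)))
        (p0.1, ((n * (p0.2 : ℕ) : ℕ) : Fin (n ^ 2)))
      = if (p.1 : ℕ) = (p0.1 : ℕ) ∧ (p.2 : ℕ) = (p0.2 : ℕ) then 1 else 0 :=
    fun p => eval_aux n q (p.1 : ℕ) (p.2 : ℕ) (p0.1 : ℕ) (p0.2 : ℕ) p0.1.isLt p.2.isLt p0.2.isLt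
  simp only [key] at heval
  rw [Finset.sum_eq_single p0 (fun b _ hbne => by
      rw [if_neg, mul_zero]
      intro hcc
      exact hbne (Prod.ext (Fin.ext hcc.1) (Fin.ext hcc.2)))
    (fun h => absurd (Finset.mem_univ p0) h)] at heval
  rw [if_pos ⟨rfl, rfl⟩, mul_one] at heval
  exact heval

end Eval

section Span

variable {k : Type*} [Field k] {n : ℕ} {q : k}

/-- The candidate basis monomials x^i a^j. -/
noncomputable def taftMono (k : Type*) [Field k] (n : ℕ) (q : k) :
    Fin (n ^ 2) × Fin n → TaftAlgebra k n q :=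
  fun p => TaftX k n q ^ (p.1 : ℕ) * (TaftG k n q ^ n) ^ (p.2 : ℕ)

/-- The span of the monomials x^i a^j. -/
noncomputable def taftS (k : Type*) [Field k] (n : ℕ) (q : k) :
    Submodule k (TaftAlgebra k n q) :=
  Submodule.span k (Set.range (taftMono k n q))

lemma mono_mul (i j i' j' : ℕ) :
    (TaftX k n q ^ i * (TaftG k n q ^ n) ^ j) * (TaftX k n q ^ i' * (TaftG k n q ^ n) ^ j') =
      q ^ (n * j * i') • (TaftX k n q ^ (i + i') * (TaftG k n q ^ n) ^ (j + j')) := by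
  rw [← pow_mul, ← pow_mul, ← pow_mul, Nat.mul_add]
  rw [mul_assoc (TaftX k n q ^ i), ← mul_assoc (TaftG k n q ^ (n * j)), taftG_pow_mul_X_pow]
  rw [smul_mul_assoc, mul_smul_comm, pow_add]
  rw [mul_assoc, mul_assoc, mul_assoc, ← pow_add]

lemma mono_mem (hn : 2 ≤ n) (i j : ℕ) :
    TaftX k n q ^ i * (TaftG k n q ^ n) ^ j ∈ taftS k n q := by
  by_cases hi : i < n ^ 2
  · have h1 : ((TaftG k n q ^ n) ^ n) = 1 := by
      rw [← pow_mul, show n * n = n ^ 2 from (pow_two n).symm, taftG_pow]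
    have hred : (TaftG k n q ^ n) ^ j = (TaftG k n q ^ n) ^ (j % n) := by
      conv_lhs => rw [← Nat.div_add_mod j n]
      rw [pow_add, pow_mul, h1, one_pow, one_mul]
    rw [hred]
    exact Submodule.subset_span ⟨(⟨i, hi⟩, ⟨j % n, Nat.mod_lt _ (by omega)⟩), rfl⟩
  · have hx : TaftX k n q ^ i = 0 := by
      rw [show i = n ^ 2 + (i - n ^ 2) by omega, pow_add, taftX_pow, zero_mul]
    rw [hx, zero_mul]
    exact zero_mem _

lemma taftS_mul_mem (hn : 2 ≤ n) {u v : TaftAlgebra k n q}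
    (hu : u ∈ taftS k n q) (hv : v ∈ taftS k n q) : u * v ∈ taftS k n q := by
  have hle : taftS k n q * taftS k n q ≤ taftS k n q := by
    rw [taftS, Submodule.span_mul_span]
    refine Submodule.span_le.mpr ?_
    rintro z ⟨a, ⟨pa, rfl⟩, b, ⟨pb, rfl⟩, rfl⟩
    show taftMono k n q pa * taftMono k n q pb ∈ taftS k n q
    simp only [taftMono]
    rw [mono_mul]
    exact Submodule.smul_mem _ _ (mono_mem hn _ _)
  exact hle (Submodule.mul_mem_mul hu hv)

lemma adjoin_le_taftS (hn : 2 ≤ n) :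
    ∀ z ∈ Algebra.adjoin k {TaftG k n q ^ n, TaftX k n q}, z ∈ taftS k n q := by
  intro z hz
  induction hz using Algebra.adjoin_induction with
  | mem x hx =>
    rcases Set.mem_insert_iff.mp hx with rfl | hx
    · have h := mono_mem (q := q) hn 0 1
      simpa using h
    · rw [Set.mem_singleton_iff] at hx
      subst hx
      have h := mono_mem (q := q) hn 1 0
      simpa using h
  | algebraMap r =>
    have h1 : (1 : TaftAlgebra k n q) ∈ taftS k n q := by
      simpa using mono_mem (q := q) hn 0 0
    rw [Algebra.algebraMap_eq_smul_one]
    exact Submodule.smul_mem _ _ h1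
  | add x y _ _ hx hy => exact add_mem hx hy
  | mul x y _ _ hx hy => exact taftS_mul_mem hn hx hy

end Span

set_option synthInstance.maxHeartbeats 1000000 in
/-- The subalgebra A(q) of the Taft algebra generated by a := gⁿ and x has
    dimension n³, with basis {xⁱ aʲ : 0 ≤ i < n², 0 ≤ j < n}. -/
theorem taft_subalgebra_basis (n : ℕ) (hn : 2 ≤ n) (k : Type*) [Field k]
    (hchar : (n : k) ≠ 0) (q : k) (hq : IsPrimitiveRoot q (n ^ 2)) :
    let A : Subalgebra k (TaftAlgebra k n q) :=
      Algebra.adjoin k {TaftG k n q ^ n, TaftX k n q}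
    (∃ b : Module.Basis (Fin (n ^ 2) × Fin n) k A,
      ∀ p : Fin (n ^ 2) × Fin n,
        (b p : TaftAlgebra k n q) =
          TaftX k n q ^ (p.1 : ℕ) * (TaftG k n q ^ n) ^ (p.2 : ℕ)) ∧
    Module.finrank k A = n ^ 3 := by
  intro A
  haveI : NeZero n := ⟨by omega⟩
  have hq1 : q ^ (n ^ 2) = 1 := hq.pow_eq_one
  have hGn : TaftG k n q ^ n ∈ A := Algebra.subset_adjoin (Set.mem_insert _ _)
  have hX : TaftX k n q ∈ A := Algebra.subset_adjoin (Set.mem_insert_of_mem _ rfl)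
  have hwA : ∀ p : Fin (n ^ 2) × Fin n, taftMono k n q p ∈ A := fun p =>
    mul_mem (pow_mem hX (p.1 : ℕ)) (pow_mem hGn (p.2 : ℕ))
  let v : Fin (n ^ 2) × Fin n → A := fun p => ⟨taftMono k n q p, hwA p⟩
  have hind : LinearIndependent k v := by
    refine LinearIndependent.of_comp (Subalgebra.val A).toLinearMap ?_
    exact taft_w_indep n hn q hq1
  have hsp : ⊤ ≤ Submodule.span k (Set.range v) := by
    rintro ⟨z, hz⟩ -
    have hz' : z ∈ taftS k n q := adjoin_le_taftS hn z hz
    rw [taftS] at hz'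
    have himg : Submodule.span k (Set.range (taftMono k n q)) =
        Submodule.map (Subalgebra.val A).toLinearMap (Submodule.span k (Set.range v)) := by
      rw [Submodule.map_span, ← Set.range_comp]
      rfl
    rw [himg] at hz'
    obtain ⟨y, hy, hyz⟩ := Submodule.mem_map.mp hz'
    have hyy : y = ⟨z, hz⟩ := Subtype.ext hyz
    exact hyy ▸ hy
  refine ⟨⟨Module.Basis.mk hind hsp, fun p => ?_⟩, ?_⟩
  · rw [Module.Basis.mk_apply]
    rfl
  · rw [Module.finrank_eq_card_basis (Module.Basis.mk hind hsp)]
    simp [pow_succ]
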